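/- Suppose (X, H) is a hypothesis class which does not have finite Littlestone dimension. Then for every d ∈ ℕ and every T ∈ ℕ with 2^T > Σ_{i=0}^{d} C(T,i), and for every family A of at most Σ_{i=0}^{d} C(T,i) adaptive experts over X, there is a complete binary tree of depth T with X-labeled internal nodes and some h ∈ H which realizes a branch of this tree that is not realized by any expert in A. -/

import Mathlib

open scoped Classical

/-- `h` realizes the branch `y` in the binary tree with node labels given by `t`
(the node reached by the bit string `s` is labeled `t s`). -/
def Realizes {X : Type*} (t : List Bool → X) (h : X → Bool) (y : List Bool) : Prop :=
  ∀ i : Fin y.length, h (t (y.take i)) = y.get i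

/-- `H` shatters some complete binary mistake tree of depth `d`. -/
def Shatters {X : Type*} (H : Set (X → Bool)) (d : ℕ) : Prop :=
  ∃ t : List Bool → X, ∀ y : List Bool, y.length = d → ∃ h ∈ H, Realizes t h y

/-- Littlestone dimension: supremum of depths of shattered mistake trees
(`⊥` for the empty class, `⊤` if unbounded). -/
noncomputable def Ldim {X : Type*} (H : Set (X → Bool)) : WithBot ℕ∞ :=
  sSup {d : WithBot ℕ∞ | ∃ n : ℕ, Shatters H n ∧ d = ((n : ℕ∞) : WithBot ℕ∞)}

/-- An adaptive expert `E : List X → Bool` realizes the branch `y` of the tree with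
node labels `t`: at each step it is fed the labels seen so far (including the current
node) and must output the branch direction. -/
def ExpertRealizes {X : Type*} (t : List Bool → X) (E : List X → Bool) (y : List Bool) : Prop :=
  ∀ i : Fin y.length, E ((List.range (i.1 + 1)).map fun j => t (y.take j)) = y.get i

-- expert realizes at most one branch of given length
lemma expert_unique {X : Type*} (t : List Bool → X) (E : List X → Bool)
    {y y' : List Bool} (hlen : y.length = y'.length)
    (h1 : ExpertRealizes t E y) (h2 : ExpertRealizes t E y') : y = y' := by
  have key : ∀ k, k ≤ y.length → y.take k = y'.take k := by
    intro k
    induction k with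
    | zero => simp
    | succ k ih =>
      intro hk
      have hky : k < y.length := Nat.lt_of_succ_le hk
      have htk : y.take k = y'.take k := ih (le_of_lt hky)
      have hin : (List.range (k+1)).map (fun j => t (y.take j))
          = (List.range (k+1)).map (fun j => t (y'.take j)) := by
        apply List.map_congr_left
        intro j hj
        have hj' : j ≤ k := Nat.lt_succ_iff.mp (List.mem_range.mp hj)
        congr 1
        calc y.take j = (y.take k).take j := by rw [List.take_take, Nat.min_eq_left hj']
          _ = (y'.take k).take j := by rw [htk]
          _ = y'.take j := by rw [List.take_take, Nat.min_eq_left hj']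
      have hg : y.get ⟨k, hky⟩ = y'.get ⟨k, hlen ▸ hky⟩ := by
        rw [← h1 ⟨k, hky⟩, ← h2 ⟨k, hlen ▸ hky⟩, hin]
      rw [List.take_succ, List.take_succ, htk]
      simp only [List.get_eq_getElem] at hg
      simp [List.getElem?_eq_getElem hky, List.getElem?_eq_getElem (hlen ▸ hky : k < y'.length), hg]
  have := key y.length le_rfl
  rwa [List.take_length, hlen, List.take_length] at this

lemma shatters_mono {X : Type*} {H : Set (X → Bool)} {n T : ℕ} (hTn : T ≤ n)
    (h : Shatters H n) : Shatters H T := by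
  obtain ⟨t, ht⟩ := h
  refine ⟨t, fun y hy => ?_⟩
  obtain ⟨h, hH, hr⟩ := ht (y ++ List.replicate (n - T) false)
    (by simp [hy, Nat.add_sub_cancel' hTn])
  refine ⟨h, hH, fun i => ?_⟩
  have hiy : i.1 < y.length := i.2
  have hi' : i.1 < (y ++ List.replicate (n - T) false).length := by
    simp; omega
  have := hr ⟨i.1, hi'⟩
  rwa [List.take_append_of_le_length (le_of_lt hiy),
    show (y ++ List.replicate (n - T) false).get ⟨i.1, hi'⟩ = y.get i from
      by simp [List.getElem_append_left hiy]] at this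

lemma shatters_of_ldim_top {X : Type*} {H : Set (X → Bool)} (hinf : Ldim H = ⊤) (T : ℕ) :
    Shatters H T := by
  by_contra hc
  have hb : ∀ d ∈ {d : WithBot ℕ∞ | ∃ n : ℕ, Shatters H n ∧ d = ((n : ℕ∞) : WithBot ℕ∞)},
      d ≤ ((T : ℕ∞) : WithBot ℕ∞) := by
    rintro d ⟨n, hn, rfl⟩
    have hnT : n ≤ T := by
      by_contra h
      exact hc (shatters_mono (le_of_lt (Nat.lt_of_not_le h)) hn)
    exact_mod_cast hnT
  have := sSup_le hb
  rw [Ldim] at hinf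
  rw [hinf] at this
  simp at this
  exact ENat.coe_ne_top T (WithBot.coe_injective this)


/-- if `H` does not have finite Littlestone dimension, then no family of
`≤ Σ_{i≤d} C(T,i)` adaptive experts (with `2^T > Σ_{i≤d} C(T,i)`) covers all branches
realized by `H` in all depth-`T` trees. -/
theorem stmt_5 {X : Type*} (H : Set (X → Bool)) (hinf : Ldim H = ⊤)
    (d T : ℕ) (hT : (∑ i ∈ Finset.range (d + 1), T.choose i) < 2 ^ T)
    (A : Finset (List X → Bool))
    (hA : A.card ≤ ∑ i ∈ Finset.range (d + 1), T.choose i) :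
    ∃ t : List Bool → X, ∃ h ∈ H, ∃ y : List Bool, y.length = T ∧
      Realizes t h y ∧ ∀ E ∈ A, ¬ ExpertRealizes t E y := by
  obtain ⟨t, ht⟩ := shatters_of_ldim_top hinf T
  by_contra hcon
  push_neg at hcon
  -- every branch of length T is realized by some expert in A
  have hall : ∀ v : Fin T → Bool, ∃ E ∈ A, ExpertRealizes t E (List.ofFn v) := by
    intro v
    have hlen : (List.ofFn v).length = T := List.length_ofFn
    obtain ⟨h, hH, hr⟩ := ht (List.ofFn v) hlen
    obtain ⟨E, hE, hER⟩ := hcon t h hH (List.ofFn v) hlen hr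
    exact ⟨E, hE, hER⟩
  choose F hFA hFE using hall
  have hinj : Function.Injective F := by
    intro v v' hvv'
    have := expert_unique t (F v) (by simp : (List.ofFn v).length = (List.ofFn v').length)
      (hFE v) (hvv' ▸ hFE v')
    have := List.ofFn_injective this
    exact this
  have hcard : Fintype.card (Fin T → Bool) ≤ A.card := by
    have : Function.Injective (fun v => (⟨F v, hFA v⟩ : {E // E ∈ A})) := by
      intro v v' h
      exact hinj (Subtype.mk_eq_mk.mp h)
    calc Fintype.card (Fin T → Bool) ≤ Fintype.card {E // E ∈ A} := Fintype.card_le_of_injective _ this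
      _ = A.card := Fintype.card_coe A
  simp [Fintype.card_fun] at hcard
  omega
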